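/- Let Ω be a nonempty finite type and let E = ⟨𝓔, mod⟩ be an epistemic space over Ω. Then AGM revision is realizable in E if and only if there exists a maxichoice revision operator for E. -/
import Mathlib


open Set

/-- `minSet r S` is the set of `r`-minimal elements of `S`:
`min(S, r) = {ω ∈ S : r ω ω' for all ω' ∈ S}`. -/
def minSet {Ω : Type*} (r : Ω → Ω → Prop) (S : Set Ω) : Set Ω :=
  {ω ∈ S | ∀ ω' ∈ S, r ω ω'}

/-- A linear order as a relation: total, antisymmetric and transitive. -/
def IsLinRel {Ω : Type*} (r : Ω → Ω → Prop) : Prop :=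
  (∀ a b, r a b ∨ r b a) ∧ (∀ a b, r a b → r b a → a = b) ∧
    (∀ a b c, r a b → r b c → r a c)

/-- AGM contraction operator for the epistemic space `⟨E, md⟩` (postulates C1–C7,
formulated on model sets). -/
def IsContraction {Ω E : Type*} (md : E → Set Ω) (c : E → Set Ω → E) : Prop :=
  ∀ (Ψ : E) (A B : Set Ω),
    md Ψ ⊆ md (c Ψ A) ∧
    (¬ md Ψ ⊆ A → md (c Ψ A) ⊆ md Ψ) ∧
    (A ≠ Set.univ → ¬ md (c Ψ A) ⊆ A) ∧
    md (c Ψ A) ∩ A ⊆ md Ψ ∧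
    md (c Ψ (A ∩ B)) ⊆ md (c Ψ A) ∪ md (c Ψ B) ∧
    (¬ md (c Ψ (A ∩ B)) ⊆ B → md (c Ψ B) ⊆ md (c Ψ (A ∩ B)))

/-- AGM revision operator for the epistemic space `⟨E, md⟩` (postulates R1–R6,
formulated on model sets). -/
def IsRevision {Ω E : Type*} (md : E → Set Ω) (s : E → Set Ω → E) : Prop :=
  ∀ (Ψ : E) (A B : Set Ω),
    md (s Ψ A) ⊆ A ∧
    (md Ψ ∩ A ≠ ∅ → md (s Ψ A) = md Ψ ∩ A) ∧
    (A ≠ ∅ → md (s Ψ A) ≠ ∅) ∧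
    md (s Ψ A) ∩ B ⊆ md (s Ψ (A ∩ B)) ∧
    (md (s Ψ A) ∩ B ≠ ∅ → md (s Ψ (A ∩ B)) ⊆ md (s Ψ A) ∩ B)

/-- Postulate (ZC). -/
def ZC {Ω E : Type*} (md : E → Set Ω) : Prop :=
  ∀ (Ψ : E) (M : Set Ω), md Ψ ⊆ M → ∃ Ψ' : E, md Ψ' = M

/-- Postulate (ZR1). -/
def ZR1 {Ω E : Type*} (md : E → Set Ω) : Prop :=
  ∀ ω : Ω, ∃ Ψ : E, md Ψ = {ω}

/-- Postulate (ZR2). -/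
def ZR2 {Ω E : Type*} (md : E → Set Ω) : Prop :=
  ∀ (Ψ : E) (M : Set Ω), M ⊆ md Ψ → ∃ Ψ' : E, md Ψ' = M

/-- Postulate (Unbiased). -/
def Unbiased {Ω E : Type*} (md : E → Set Ω) : Prop :=
  ∀ M : Set Ω, ∃ Ψ : E, md Ψ = M

/-- Maxichoice contraction operator. -/
def IsMaxichoiceContraction {Ω E : Type*} (md : E → Set Ω) (c : E → Set Ω → E) : Prop :=
  IsContraction md c ∧
    ∀ Ψ : E, ∃ r : Ω → Ω → Prop, IsLinRel r ∧ ∀ A : Set Ω,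
      (¬ md Ψ ⊆ A → md (c Ψ A) = md Ψ) ∧
      (md Ψ ⊆ A → md (c Ψ A) = md Ψ ∪ minSet r Aᶜ)

/-- Linear contraction operator: a maxichoice contraction operator based on one
single linear order for all epistemic states. -/
def IsLinearContraction {Ω E : Type*} (md : E → Set Ω) (c : E → Set Ω → E) : Prop :=
  IsContraction md c ∧
    ∃ r : Ω → Ω → Prop, IsLinRel r ∧ ∀ (Ψ : E) (A : Set Ω),
      (¬ md Ψ ⊆ A → md (c Ψ A) = md Ψ) ∧
      (md Ψ ⊆ A → md (c Ψ A) = md Ψ ∪ minSet r Aᶜ)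

/-- Full meet contraction operator. -/
def IsFullMeetContraction {Ω E : Type*} (md : E → Set Ω) (c : E → Set Ω → E) : Prop :=
  IsContraction md c ∧
    ∀ (Ψ : E) (A : Set Ω),
      (¬ md Ψ ⊆ A → md (c Ψ A) = md Ψ) ∧
      (md Ψ ⊆ A → md (c Ψ A) = md Ψ ∪ Aᶜ)

/-- Maxichoice revision operator. -/
def IsMaxichoiceRevision {Ω E : Type*} (md : E → Set Ω) (s : E → Set Ω → E) : Prop :=
  IsRevision md s ∧
    ∀ Ψ : E, ∃ r : Ω → Ω → Prop, IsLinRel r ∧ ∀ A : Set Ω,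
      (md Ψ ∩ A ≠ ∅ → md (s Ψ A) = md Ψ ∩ A) ∧
      (md Ψ ∩ A = ∅ → md (s Ψ A) = minSet r A)

/-- Linear revision operator: a maxichoice revision operator based on one single
linear order for all epistemic states. -/
def IsLinearRevision {Ω E : Type*} (md : E → Set Ω) (s : E → Set Ω → E) : Prop :=
  IsRevision md s ∧
    ∃ r : Ω → Ω → Prop, IsLinRel r ∧ ∀ (Ψ : E) (A : Set Ω),
      (md Ψ ∩ A ≠ ∅ → md (s Ψ A) = md Ψ ∩ A) ∧
      (md Ψ ∩ A = ∅ → md (s Ψ A) = minSet r A)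

/-- Full meet revision operator. -/
def IsFullMeetRevision {Ω E : Type*} (md : E → Set Ω) (s : E → Set Ω → E) : Prop :=
  IsRevision md s ∧
    ∀ (Ψ : E) (A : Set Ω),
      (md Ψ ∩ A ≠ ∅ → md (s Ψ A) = md Ψ ∩ A) ∧
      (md Ψ ∩ A = ∅ → md (s Ψ A) = A)


lemma minSet_eq_singleton {Ω : Type*} {r : Ω → Ω → Prop} (hr : IsLinRel r)
    {A : Set Ω} {a : Ω} (ha : a ∈ A) (hmin : ∀ b ∈ A, r a b) :
    minSet r A = {a} := by
  ext b
  simp only [minSet, Set.mem_setOf_eq, Set.mem_singleton_iff]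
  constructor
  · rintro ⟨hbA, hb⟩
    exact hr.2.1 b a (hb a ha) (hmin b hbA)
  · rintro rfl
    exact ⟨ha, hmin⟩

lemma minSet_empty {Ω : Type*} (r : Ω → Ω → Prop) : minSet r ∅ = ∅ := by
  simp [minSet]

/-- AGM revision is realizable in `⟨E, md⟩` iff there exists a
maxichoice revision operator for `⟨E, md⟩`. -/
theorem revision_realizable_iff_maxichoiceRevision {Ω E : Type*} [Fintype Ω] [Nonempty Ω] [Nonempty E]
    (md : E → Set Ω) :
    (∃ s : E → Set Ω → E, IsRevision md s) ↔
      (∃ s : E → Set Ω → E, IsMaxichoiceRevision md s) := by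
  classical
  constructor
  · rintro ⟨s, hs⟩
    -- a global linear order on Ω
    let e : Ω ≃ Fin (Fintype.card Ω) := Fintype.equivFin Ω
    set r : Ω → Ω → Prop := fun a b => e a ≤ e b with hr_def
    have hr : IsLinRel r :=
      ⟨fun a b => le_total (e a) (e b),
       fun a b h1 h2 => e.injective (le_antisymm h1 h2),
       fun a b c h1 h2 => le_trans h1 h2⟩
    -- minimum of a nonempty set
    have hmin : ∀ A : Set Ω, A.Nonempty → ∃ a ∈ A, ∀ b ∈ A, r a b := by
      intro A hA
      obtain ⟨a, haA, ha⟩ := Set.exists_min_image A (fun x => e x) A.toFinite hA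
      exact ⟨a, haA, ha⟩
    -- target model sets
    set T : E → Set Ω → Set Ω :=
      fun Ψ A => if (md Ψ ∩ A).Nonempty then md Ψ ∩ A else minSet r A with hT_def
    have hT1 : ∀ Ψ A, (md Ψ ∩ A).Nonempty → T Ψ A = md Ψ ∩ A := by
      intro Ψ A h; simp [hT_def, h]
    have hT2 : ∀ Ψ A, ¬ (md Ψ ∩ A).Nonempty → T Ψ A = minSet r A := by
      intro Ψ A h; simp [hT_def, h]
    -- realizability of target sets
    have hex : ∀ (Ψ : E) (A : Set Ω), ∃ Φ : E, md Φ = T Ψ A := by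
      intro Ψ A
      by_cases h : (md Ψ ∩ A).Nonempty
      · refine ⟨s Ψ A, ?_⟩
        rw [hT1 Ψ A h]
        exact (hs Ψ A A).2.1 (Set.nonempty_iff_ne_empty.mp h)
      · rw [hT2 Ψ A h]
        rcases Set.eq_empty_or_nonempty A with hA | hA
        · refine ⟨s Ψ ∅, ?_⟩
          rw [hA, minSet_empty]
          exact Set.subset_empty_iff.mp ((hs Ψ ∅ ∅).1)
        · obtain ⟨a, haA, ha⟩ := hmin A hA
          rw [minSet_eq_singleton hr haA ha]
          refine ⟨s Ψ {a}, ?_⟩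
          have h1 : md (s Ψ {a}) ⊆ {a} := (hs Ψ {a} {a}).1
          have h2 : md (s Ψ {a}) ≠ ∅ :=
            (hs Ψ {a} {a}).2.2.1 (Set.singleton_ne_empty a)
          rcases Set.subset_singleton_iff_eq.mp h1 with h | h
          · exact absurd h h2
          · exact h
    -- the maxichoice operator
    choose s' hs' using fun Ψ A => hex Ψ A
    -- key facts about T
    have hTsub : ∀ Ψ A, T Ψ A ⊆ A := by
      intro Ψ A
      by_cases h : (md Ψ ∩ A).Nonempty
      · rw [hT1 Ψ A h]; exact Set.inter_subset_right
      · rw [hT2 Ψ A h]; intro x hx; exact hx.1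
    have hTne : ∀ Ψ A, A ≠ ∅ → T Ψ A ≠ ∅ := by
      intro Ψ A hA
      by_cases h : (md Ψ ∩ A).Nonempty
      · rw [hT1 Ψ A h]; exact Set.nonempty_iff_ne_empty.mp h
      · rw [hT2 Ψ A h]
        obtain ⟨a, haA, ha⟩ := hmin A (Set.nonempty_iff_ne_empty.mpr hA)
        rw [minSet_eq_singleton hr haA ha]
        exact Set.singleton_ne_empty a
    refine ⟨s', ?_, ?_⟩
    · -- IsRevision
      intro Ψ A B
      refine ⟨?_, ?_, ?_, ?_, ?_⟩
      · rw [hs' Ψ A]; exact hTsub Ψ A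
      · intro h
        rw [hs' Ψ A, hT1 Ψ A (Set.nonempty_iff_ne_empty.mpr h)]
      · intro hA
        rw [hs' Ψ A]; exact hTne Ψ A hA
      · -- R5
        rw [hs' Ψ A, hs' Ψ (A ∩ B)]
        by_cases h : (md Ψ ∩ A).Nonempty
        · rw [hT1 Ψ A h]
          by_cases h2 : (md Ψ ∩ (A ∩ B)).Nonempty
          · rw [hT1 Ψ (A ∩ B) h2]
            intro x hx
            exact ⟨hx.1.1, hx.1.2, hx.2⟩
          · intro x hx
            exact absurd ⟨x, hx.1.1, hx.1.2, hx.2⟩ h2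
        · have h2 : ¬ (md Ψ ∩ (A ∩ B)).Nonempty := by
            intro ⟨x, hx⟩; exact h ⟨x, hx.1, hx.2.1⟩
          rw [hT2 Ψ A h, hT2 Ψ (A ∩ B) h2]
          rcases Set.eq_empty_or_nonempty A with hA | hA
          · rw [hA, minSet_empty]
            intro x hx; exact absurd hx.1 (Set.notMem_empty x)
          · obtain ⟨a, haA, ha⟩ := hmin A hA
            rw [minSet_eq_singleton hr haA ha]
            rintro x ⟨hx1, hx2⟩
            rcases hx1 with rfl
            have haAB : x ∈ A ∩ B := ⟨haA, hx2⟩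
            rw [minSet_eq_singleton hr haAB (fun b hb => ha b hb.1)]
            rfl
      · -- R6
        intro hne
        rw [hs' Ψ A, hs' Ψ (A ∩ B)]
        rw [hs' Ψ A] at hne
        replace hne := Set.nonempty_iff_ne_empty.mpr hne
        by_cases h : (md Ψ ∩ A).Nonempty
        · rw [hT1 Ψ A h]
          rw [hT1 Ψ A h] at hne
          have h2 : (md Ψ ∩ (A ∩ B)).Nonempty := by
            obtain ⟨x, hx⟩ := hne
            exact ⟨x, hx.1.1, hx.1.2, hx.2⟩
          rw [hT1 Ψ (A ∩ B) h2]
          intro x hx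
          exact ⟨⟨hx.1, hx.2.1⟩, hx.2.2⟩
        · have h2 : ¬ (md Ψ ∩ (A ∩ B)).Nonempty := by
            intro ⟨x, hx⟩; exact h ⟨x, hx.1, hx.2.1⟩
          rw [hT2 Ψ A h, hT2 Ψ (A ∩ B) h2]
          rw [hT2 Ψ A h] at hne
          rcases Set.eq_empty_or_nonempty A with hA | hA
          · rw [hA, minSet_empty] at hne ⊢
            exact absurd hne (by simp)
          · obtain ⟨a, haA, ha⟩ := hmin A hA
            rw [minSet_eq_singleton hr haA ha] at hne ⊢
            obtain ⟨x, hx1, hx2⟩ := hne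
            rcases hx1 with rfl
            have haAB : x ∈ A ∩ B := ⟨haA, hx2⟩
            rw [minSet_eq_singleton hr haAB (fun b hb => ha b hb.1)]
            exact Set.subset_inter (subset_refl _) (Set.singleton_subset_iff.mpr hx2)
    · -- maxichoice condition
      intro Ψ
      refine ⟨r, hr, fun A => ⟨?_, ?_⟩⟩
      · intro h
        rw [hs' Ψ A, hT1 Ψ A (Set.nonempty_iff_ne_empty.mpr h)]
      · intro h
        rw [hs' Ψ A, hT2 Ψ A (by rw [Set.not_nonempty_iff_eq_empty]; exact h)]
  · rintro ⟨s, hs, _⟩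
    exact ⟨s, hs⟩
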